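/- Let $K$ be a square of side length $l$ in the plane and let $u \in H^1(K)$. Then $\|u\|_{L^2(K)}^2 \le l^2 \langle u \rangle_K^2 + \frac{l^2}{3}\|\nabla u\|_{L^2(K)}^2$, where $\langle u \rangle_K = \frac{1}{|K|}\int_K u(x)\,dx$ denotes the average of $u$ over $K$. -/

import Mathlib

open MeasureTheory

lemma cs_step {s t : ℝ} (hst : s ≤ t) (f : ℝ → ℝ) (hf : Continuous f) :
    (∫ r in s..t, f r)^2 ≤ (t - s) * ∫ r in s..t, (f r)^2 := by
  rcases eq_or_lt_of_le hst with h | h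
  · simp [← h]
  have hint : IntervalIntegrable f volume s t := hf.intervalIntegrable s t
  have hint2 : IntervalIntegrable (fun r => (f r)^2) volume s t :=
    (hf.pow 2).intervalIntegrable s t
  set I : ℝ := ∫ r in s..t, f r with hI
  set m : ℝ := I / (t - s) with hm
  have h0 : (0:ℝ) ≤ ∫ r in s..t, (f r - m)^2 :=
    intervalIntegral.integral_nonneg hst (fun x _ => sq_nonneg _)
  have hexp : ∫ r in s..t, (f r - m)^2
      = (∫ r in s..t, (f r)^2) - 2*m*I + m^2*(t-s) := by
    have : ∀ r, (f r - m)^2 = (f r)^2 - (2*m) * f r + m^2 := by intro r; ring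
    simp_rw [this]
    rw [intervalIntegral.integral_add (hint2.sub (hint.const_mul _)) intervalIntegrable_const,
      intervalIntegral.integral_sub hint2 (hint.const_mul _),
      intervalIntegral.integral_const_mul, intervalIntegral.integral_const, ← hI]
    rw [smul_eq_mul]; ring
  rw [hexp] at h0
  have ht : 0 < t - s := by linarith
  have hmv : m * (t - s) = I := by rw [hm, div_mul_cancel₀ _ ht.ne']
  nlinarith [h0, ht, sq_nonneg m]

lemma key1d {a c : ℝ} (f f' : ℝ → ℝ) (hf : ∀ r, HasDerivAt f (f' r) r)
    (hc : Continuous f') {s t : ℝ} (hs : s ∈ Set.Icc a c) (ht : t ∈ Set.Icc a c) :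
    (f t - f s)^2 ≤ |t - s| * ∫ r in Set.Icc a c, (f' r)^2 := by
  have main : ∀ s t : ℝ, s ∈ Set.Icc a c → t ∈ Set.Icc a c → s ≤ t →
      (f t - f s)^2 ≤ |t - s| * ∫ r in Set.Icc a c, (f' r)^2 := by
    intro s t hs ht hst
    have hftc : ∫ r in s..t, f' r = f t - f s :=
      intervalIntegral.integral_eq_sub_of_hasDerivAt (fun r _ => hf r)
        (hc.intervalIntegrable s t)
    have hcs := cs_step hst f' hc
    rw [hftc] at hcs
    have hsub : ∫ r in s..t, (f' r)^2 ≤ ∫ r in Set.Icc a c, (f' r)^2 := by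
      rw [intervalIntegral.integral_of_le hst]
      apply setIntegral_mono_set ((hc.pow 2).integrableOn_Icc)
      · exact Filter.Eventually.of_forall fun r => sq_nonneg _
      · exact HasSubset.Subset.eventuallyLE (fun r hr =>
          ⟨hs.1.trans (le_of_lt hr.1), hr.2.trans ht.2⟩)
    have habs : |t - s| = t - s := abs_of_nonneg (by linarith)
    rw [habs]
    calc (f t - f s)^2 ≤ (t - s) * ∫ r in s..t, (f' r)^2 := hcs
      _ ≤ (t - s) * ∫ r in Set.Icc a c, (f' r)^2 := by
          apply mul_le_mul_of_nonneg_left hsub (by linarith)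
  rcases le_total s t with h | h
  · exact main s t hs ht h
  · have := main t s ht hs h
    have e1 : (f t - f s)^2 = (f s - f t)^2 := by ring
    have e2 : |t - s| = |s - t| := abs_sub_comm t s
    rw [e1, e2]; exact this

lemma pt_abs (a l : ℝ) {s : ℝ} (hs : s ∈ Set.Icc a (a+l)) :
    (∫ r in Set.Icc a (a+l), |s - r|) = (s-a)^2/2 + (a+l-s)^2/2 := by
  obtain ⟨h1, h2⟩ := hs
  have hal : a ≤ a + l := le_trans h1 h2
  rw [MeasureTheory.integral_Icc_eq_integral_Ioc, ← intervalIntegral.integral_of_le hal]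
  have i1 : IntervalIntegrable (fun r => |s - r|) volume a s :=
    (continuous_const.sub continuous_id).abs.intervalIntegrable _ _
  have i2 : IntervalIntegrable (fun r => |s - r|) volume s (a+l) :=
    (continuous_const.sub continuous_id).abs.intervalIntegrable _ _
  rw [← intervalIntegral.integral_add_adjacent_intervals i1 i2]
  have e1 : ∫ r in a..s, |s - r| = ∫ r in a..s, (s - r) := by
    apply intervalIntegral.integral_congr
    intro r hr
    rw [Set.uIcc_of_le h1] at hr
    exact abs_of_nonneg (by linarith [hr.2])
  have e2 : ∫ r in s..(a+l), |s - r| = ∫ r in s..(a+l), (r - s) := by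
    apply intervalIntegral.integral_congr
    intro r hr
    rw [Set.uIcc_of_le h2] at hr
    show |s - r| = r - s
    rw [abs_sub_comm]
    exact abs_of_nonneg (by linarith [hr.1])
  have v1 : ∫ r in a..s, (s - r) = (s-a)^2/2 := by
    rw [show (∫ r in a..s, (s - r)) = ∫ r in a..s, (id (s - r) : ℝ) from rfl,
      intervalIntegral.integral_comp_sub_left id s]
    simp [integral_id]
  have v2 : ∫ r in s..(a+l), (r - s) = (a+l-s)^2/2 := by
    rw [show (∫ r in s..(a+l), (r - s)) = ∫ r in s..(a+l), (id (r - s) : ℝ) from rfl,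
      intervalIntegral.integral_comp_sub_right id s]
    simp [integral_id]
  rw [e1, e2, v1, v2]

lemma int_abs_avg (a l : ℝ) (hl : 0 ≤ l) :
    (∫ s in Set.Icc a (a+l), ((s-a)^2/2 + (a+l-s)^2/2)) = l^3/3 := by
  have hal : a ≤ a + l := by linarith
  rw [MeasureTheory.integral_Icc_eq_integral_Ioc, ← intervalIntegral.integral_of_le hal]
  have i1 : IntervalIntegrable (fun s => (s-a)^2/2) volume a (a+l) := by
    apply Continuous.intervalIntegrable; fun_prop
  have i2 : IntervalIntegrable (fun s => (a+l-s)^2/2) volume a (a+l) := by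
    apply Continuous.intervalIntegrable; fun_prop
  rw [intervalIntegral.integral_add i1 i2]
  have A1 : ∫ s in a..(a+l), ((s-a)^2/2) = l^3/6 := by
    rw [intervalIntegral.integral_comp_sub_right (fun x => x^2/2) a]
    simp [intervalIntegral.integral_div, integral_pow]
    ring
  have A2 : ∫ s in a..(a+l), ((a+l-s)^2/2) = l^3/6 := by
    rw [intervalIntegral.integral_comp_sub_left (fun x => x^2/2) (a+l)]
    simp [intervalIntegral.integral_div, integral_pow]
    ring
  rw [A1, A2]; ring

section
variable (u : ℝ × ℝ → ℝ) (hu : ContDiff ℝ 1 u)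
include hu

lemma d1 (c : ℝ) (t : ℝ) :
    HasDerivAt (fun r => u (r, c)) (fderiv ℝ u (t, c) (1, 0)) t := by
  have hd := ((hu.differentiable one_ne_zero) (t, c)).hasFDerivAt
  have hline : HasDerivAt (fun r : ℝ => (r, c)) ((1 : ℝ), (0 : ℝ)) t :=
    (hasDerivAt_id t).prodMk (hasDerivAt_const t c)
  exact hd.comp_hasDerivAt t hline

lemma d2 (c : ℝ) (t : ℝ) :
    HasDerivAt (fun r => u (c, r)) (fderiv ℝ u (c, t) (0, 1)) t := by
  have hd := ((hu.differentiable one_ne_zero) (c, t)).hasFDerivAt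
  have hline : HasDerivAt (fun r : ℝ => (c, r)) ((0 : ℝ), (1 : ℝ)) t :=
    (hasDerivAt_const t c).prodMk (hasDerivAt_id t)
  exact hd.comp_hasDerivAt t hline

lemma ptwise (a b l : ℝ) {x y : ℝ × ℝ}
    (hx : x ∈ Set.Icc a (a+l) ×ˢ Set.Icc b (b+l))
    (hy : y ∈ Set.Icc a (a+l) ×ˢ Set.Icc b (b+l)) :
    (u x - u y)^2 ≤
      2 * |x.1 - y.1| * (∫ t in Set.Icc a (a+l), (fderiv ℝ u (t, x.2) (1,0))^2)
      + 2 * |x.2 - y.2| * (∫ t in Set.Icc b (b+l), (fderiv ℝ u (y.1, t) (0,1))^2) := by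
  obtain ⟨hx1, hx2⟩ := hx
  obtain ⟨hy1, hy2⟩ := hy
  have hc1 : Continuous (fun t => fderiv ℝ u (t, x.2) (1,0)) := by
    have := hu.continuous_fderiv one_ne_zero
    exact (this.comp (continuous_id.prodMk continuous_const)).clm_apply continuous_const
  have hc2 : Continuous (fun t => fderiv ℝ u (y.1, t) (0,1)) := by
    have := hu.continuous_fderiv one_ne_zero
    exact (this.comp (continuous_const.prodMk continuous_id)).clm_apply continuous_const
  have b1 := key1d (fun r => u (r, x.2)) _ (d1 u hu x.2) hc1 hy1 hx1
  have b2 := key1d (fun r => u (y.1, r)) _ (d2 u hu y.1) hc2 hy2 hx2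
  have hxe : u x = u (x.1, x.2) := by rw [Prod.mk.eta]
  have hye : u y = u (y.1, y.2) := by rw [Prod.mk.eta]
  rw [hxe, hye]
  nlinarith [b1, b2, sq_nonneg (u (x.1, x.2) - u (y.1, x.2) - (u (y.1, x.2) - u (y.1, y.2))),
    abs_nonneg (x.1 - y.1), abs_nonneg (x.2 - y.2)]
end

lemma setProdMul (f : ℝ → ℝ) (g : ℝ → ℝ) (I J : Set ℝ) :
    (∫ z in I ×ˢ J, f z.1 * g z.2) = (∫ x in I, f x) * ∫ y in J, g y := by
  rw [Measure.volume_eq_prod]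
  exact setIntegral_prod_mul f g I J

set_option maxHeartbeats 1000000 in
/-- Quantitative mean-value Poincaré inequality on a square of side `l`. -/
theorem poincare_square (l : ℝ) (hl : 0 < l) (a b : ℝ)
    (u : ℝ × ℝ → ℝ) (hu : ContDiff ℝ 1 u)
    (K : Set (ℝ × ℝ)) (hK : K = Set.Icc a (a + l) ×ˢ Set.Icc b (b + l)) :
    (∫ p in K, (u p)^2) ≤
      l^2 * ((1 / l^2) * ∫ p in K, u p)^2
      + l^2 / 3 * ∫ p in K, ((fderiv ℝ u p (1, 0))^2 + (fderiv ℝ u p (0, 1))^2) := by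
  subst hK
  set I : Set ℝ := Set.Icc a (a+l) with hI
  set J : Set ℝ := Set.Icc b (b+l) with hJ
  set K : Set (ℝ × ℝ) := I ×ˢ J with hKdef
  set g₁ : ℝ × ℝ → ℝ := fun p => (fderiv ℝ u p (1,0))^2 with hg₁
  set g₂ : ℝ × ℝ → ℝ := fun p => (fderiv ℝ u p (0,1))^2 with hg₂
  have hucont : Continuous u := hu.continuous
  have hg₁c : Continuous g₁ := ((hu.continuous_fderiv one_ne_zero).clm_apply continuous_const).pow 2
  have hg₂c : Continuous g₂ := ((hu.continuous_fderiv one_ne_zero).clm_apply continuous_const).pow 2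
  have hKc : IsCompact K := isCompact_Icc.prod isCompact_Icc
  have hKm : MeasurableSet K := (measurableSet_Icc.prod measurableSet_Icc)
  have hIm : MeasurableSet I := measurableSet_Icc
  have hJm : MeasurableSet J := measurableSet_Icc
  -- volume of K
  have hvol : (volume K).toReal = l^2 := by
    rw [hKdef, Measure.volume_eq_prod, Measure.prod_prod, hI, hJ, Real.volume_Icc, Real.volume_Icc]
    simp only [add_sub_cancel_left]
    rw [← ENNReal.ofReal_mul hl.le, ENNReal.toReal_ofReal (by nlinarith)]
    ring
  set A : ℝ := ∫ p in K, u p with hA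
  set S : ℝ := ∫ p in K, (u p)^2 with hS
  set D₁ : ℝ := ∫ p in K, g₁ p with hD₁
  set D₂ : ℝ := ∫ p in K, g₂ p with hD₂
  have hiu : IntegrableOn u K := hucont.continuousOn.integrableOn_compact hKc
  have hiu2 : IntegrableOn (fun p => (u p)^2) K :=
    (hucont.pow 2).continuousOn.integrableOn_compact hKc
  have hig₁ : IntegrableOn g₁ K := hg₁c.continuousOn.integrableOn_compact hKc
  have hig₂ : IntegrableOn g₂ K := hg₂c.continuousOn.integrableOn_compact hKc
  -- Step 1: inner expansion
  have step1 : ∀ x : ℝ × ℝ, (∫ y in K, (u x - u y)^2) = l^2*(u x)^2 - 2*(u x)*A + S := by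
    intro x
    have hconst : Integrable (fun _ : ℝ × ℝ => (u x)^2) (volume.restrict K) :=
      integrableOn_const hKc.measure_lt_top.ne
    have h1 : Integrable (fun y : ℝ × ℝ => (u x)^2 - 2*(u x)*u y) (volume.restrict K) :=
      hconst.sub (hiu.const_mul _)
    have e : ∀ y, (u x - u y)^2 = ((u x)^2 - (2*(u x)) * u y) + (u y)^2 := fun y => by ring
    calc (∫ y in K, (u x - u y)^2)
        = ∫ y in K, (((u x)^2 - 2*(u x) * u y) + (u y)^2) := by simp_rw [e]
      _ = (∫ y in K, ((u x)^2 - 2*(u x) * u y)) + ∫ y in K, (u y)^2 := integral_add h1 hiu2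
      _ = ((∫ _ in K, (u x)^2) - ∫ y in K, 2*(u x) * u y) + ∫ y in K, (u y)^2 := by
          rw [integral_sub hconst (hiu.const_mul _)]
      _ = l^2*(u x)^2 - 2*(u x)*A + S := by
          rw [setIntegral_const, measureReal_def, integral_const_mul, hvol, smul_eq_mul, hA, hS]
  have hsum : (∫ p in K, ((fderiv ℝ u p (1, 0))^2 + (fderiv ℝ u p (0, 1))^2)) = D₁ + D₂ :=
    integral_add hig₁ hig₂
  -- Step 2 setup: parametric integrals
  set G₁ : ℝ → ℝ := fun c => ∫ t in I, g₁ (t, c) with hG₁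
  set G₂ : ℝ → ℝ := fun c => ∫ t in J, g₂ (c, t) with hG₂
  set H₁ : ℝ → ℝ := fun s => ∫ r in I, |s - r| with hH₁
  set H₂ : ℝ → ℝ := fun s => ∫ r in J, |s - r| with hH₂
  have hG₁c : Continuous G₁ :=
    continuous_parametric_integral_of_continuous (f := fun c t => g₁ (t, c))
      (hg₁c.comp continuous_swap) isCompact_Icc
  have hG₂c : Continuous G₂ :=
    continuous_parametric_integral_of_continuous (f := fun c t => g₂ (c, t))
      hg₂c isCompact_Icc
  have hH₁c : Continuous H₁ :=
    continuous_parametric_integral_of_continuous (f := fun s r => |s - r|)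
      (continuous_fst.sub continuous_snd).abs isCompact_Icc
  have hH₂c : Continuous H₂ :=
    continuous_parametric_integral_of_continuous (f := fun s r => |s - r|)
      (continuous_fst.sub continuous_snd).abs isCompact_Icc
  -- Fubini facts
  have fubD₂ : (∫ c in I, G₂ c) = D₂ := (setIntegral_prod g₂ hig₂).symm
  have fubD₁ : (∫ c in J, G₁ c) = D₁ := by
    have hswapint : Integrable (fun q : ℝ × ℝ => g₁ (q.2, q.1))
        ((volume.restrict J).prod (volume.restrict I)) := by
      rw [Measure.prod_restrict]
      exact (hg₁c.comp continuous_swap).continuousOn.integrableOn_compact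
        (isCompact_Icc.prod isCompact_Icc)
    calc (∫ c in J, G₁ c) = ∫ c in J, ∫ t in I, g₁ (t, c) := rfl
      _ = ∫ t in I, ∫ c in J, g₁ (t, c) := integral_integral_swap hswapint
      _ = D₁ := (setIntegral_prod g₁ hig₁).symm
  -- 1D averages
  have avgI : (∫ s in I, H₁ s) = l^3/3 := by
    rw [setIntegral_congr_fun hIm (fun s hs => pt_abs a l hs)]
    exact int_abs_avg a l hl.le
  have avgJ : (∫ s in J, H₂ s) = l^3/3 := by
    rw [setIntegral_congr_fun hJm (fun s hs => pt_abs b l hs)]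
    exact int_abs_avg b l hl.le
  have hvolI : (∫ _ in I, (1:ℝ)) = l := by
    rw [setIntegral_const, smul_eq_mul, mul_one, hI, measureReal_def, Real.volume_Icc]
    simp [ENNReal.toReal_ofReal hl.le]
  have hvolJ : (∫ _ in J, (1:ℝ)) = l := by
    rw [setIntegral_const, smul_eq_mul, mul_one, hJ, measureReal_def, Real.volume_Icc]
    simp [ENNReal.toReal_ofReal hl.le]
  clear_value G₁ G₂ H₁ H₂ A S D₁ D₂ g₁ g₂ K I J
  -- Step 2: for x ∈ K, bound the inner integral
  have step2 : ∀ x ∈ K, (∫ y in K, (u x - u y)^2)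
      ≤ 2 * G₁ x.2 * (H₁ x.1 * l) + 2 * (D₂ * (2 * H₂ x.2)) / 2 := by
    intro x hx
    have hBc : Continuous (fun y : ℝ × ℝ =>
        2*|x.1 - y.1| * G₁ x.2 + 2*|x.2 - y.2| * G₂ y.1) := by
      apply Continuous.add
      · exact (continuous_const.mul (continuous_const.sub continuous_fst).abs).mul continuous_const
      · exact (continuous_const.mul (continuous_const.sub continuous_snd).abs).mul
          (hG₂c.comp continuous_fst)
    have hiBy : IntegrableOn (fun y : ℝ × ℝ =>
        2*|x.1 - y.1| * G₁ x.2 + 2*|x.2 - y.2| * G₂ y.1) K :=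
      hBc.continuousOn.integrableOn_compact hKc
    have hiE : IntegrableOn (fun y => (u x - u y)^2) K :=
      ((continuous_const.sub hucont).pow 2).continuousOn.integrableOn_compact hKc
    have hpt : ∀ y ∈ K, (u x - u y)^2
        ≤ 2*|x.1 - y.1| * G₁ x.2 + 2*|x.2 - y.2| * G₂ y.1 := by
      intro y hy
      rw [hKdef, hI, hJ] at hx hy
      simp only [hG₁, hG₂, hg₁, hg₂, hI, hJ]
      exact ptwise u hu a b l hx hy
    have hmono := setIntegral_mono_on hiE hiBy hKm hpt
    have hiB1 : IntegrableOn (fun y : ℝ × ℝ => 2*|x.1 - y.1| * G₁ x.2) K :=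
      ((continuous_const.mul (continuous_const.sub continuous_fst).abs).mul
        continuous_const).continuousOn.integrableOn_compact hKc
    have hiB2 : IntegrableOn (fun y : ℝ × ℝ => 2*|x.2 - y.2| * G₂ y.1) K :=
      ((continuous_const.mul (continuous_const.sub continuous_snd).abs).mul
        (hG₂c.comp continuous_fst)).continuousOn.integrableOn_compact hKc
    have e1 : (∫ y in K, 2*|x.1 - y.1| * G₁ x.2) = 2 * G₁ x.2 * (H₁ x.1 * l) := by
      have : (∫ y in K, 2*|x.1 - y.1| * G₁ x.2)
          = (∫ y₁ in I, 2*|x.1 - y₁| * G₁ x.2) * ∫ _ in J, (1:ℝ) := by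
        rw [hKdef, ← setProdMul (fun y₁ => 2*|x.1 - y₁| * G₁ x.2) (fun _ => (1:ℝ)) I J]
        simp
      rw [this, hvolJ]
      have : (∫ y₁ in I, 2*|x.1 - y₁| * G₁ x.2)
          = 2 * G₁ x.2 * ∫ y₁ in I, |x.1 - y₁| := by
        rw [← integral_const_mul]
        congr 1; funext y₁; ring
      rw [this]; simp only [hH₁]; ring
    have e2 : (∫ y in K, 2*|x.2 - y.2| * G₂ y.1) = D₂ * (2 * H₂ x.2) := by
      have : (∫ y in K, 2*|x.2 - y.2| * G₂ y.1)
          = (∫ y₁ in I, G₂ y₁) * ∫ y₂ in J, 2*|x.2 - y₂| := by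
        rw [hKdef, ← setProdMul G₂ (fun y₂ => 2*|x.2 - y₂|) I J]
        congr 1; funext y; ring
      rw [this, fubD₂]
      simp only [hH₂]
      congr 1
      rw [← integral_const_mul]
    calc (∫ y in K, (u x - u y)^2)
        ≤ ∫ y in K, (2*|x.1 - y.1| * G₁ x.2 + 2*|x.2 - y.2| * G₂ y.1) := hmono
      _ = (∫ y in K, 2*|x.1 - y.1| * G₁ x.2) + ∫ y in K, 2*|x.2 - y.2| * G₂ y.1 :=
          integral_add hiB1 hiB2
      _ = 2 * G₁ x.2 * (H₁ x.1 * l) + 2 * (D₂ * (2 * H₂ x.2)) / 2 := by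
          rw [e1, e2]; ring
  -- Step 3: integrate over x
  have hiL : IntegrableOn (fun x => l^2*(u x)^2 - 2*(u x)*A + S) K := by
    have h1 : IntegrableOn (fun x : ℝ × ℝ => l^2*(u x)^2) K := hiu2.const_mul _
    have h2 : IntegrableOn (fun x : ℝ × ℝ => 2*(u x)*A) K := (hiu.const_mul 2).mul_const A
    have h3 : IntegrableOn (fun _ : ℝ × ℝ => S) K :=
      integrableOn_const hKc.measure_lt_top.ne
    exact (h1.sub h2).add h3
  have hiR : IntegrableOn (fun x : ℝ × ℝ =>
      2 * G₁ x.2 * (H₁ x.1 * l) + 2 * (D₂ * (2 * H₂ x.2)) / 2) K := by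
    have hc : Continuous (fun x : ℝ × ℝ =>
        2 * G₁ x.2 * (H₁ x.1 * l) + 2 * (D₂ * (2 * H₂ x.2)) / 2) :=
      ((continuous_const.mul (hG₁c.comp continuous_snd)).mul
        ((hH₁c.comp continuous_fst).mul continuous_const)).add
        ((continuous_const.mul (continuous_const.mul (continuous_const.mul
          (hH₂c.comp continuous_snd)))).div_const 2)
    exact hc.continuousOn.integrableOn_compact hKc
  have step3 : (∫ x in K, (l^2*(u x)^2 - 2*(u x)*A + S))
      ≤ ∫ x in K, (2 * G₁ x.2 * (H₁ x.1 * l) + 2 * (D₂ * (2 * H₂ x.2)) / 2) := by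
    apply setIntegral_mono_on hiL hiR hKm
    intro x hx
    rw [← step1 x]
    exact step2 x hx
  -- Evaluate both sides of step3
  have lhs_eval : (∫ x in K, (l^2*(u x)^2 - 2*(u x)*A + S)) = 2*l^2*S - 2*A^2 := by
    clear * - hiu hiu2 hKc hvol hA hS
    have h1 : IntegrableOn (fun x : ℝ × ℝ => l^2*(u x)^2) K := hiu2.const_mul _
    have h2 : IntegrableOn (fun x : ℝ × ℝ => 2*(u x)*A) K := (hiu.const_mul 2).mul_const A
    have h3 : IntegrableOn (fun _ : ℝ × ℝ => S) K :=
      integrableOn_const hKc.measure_lt_top.ne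
    have c1 : (∫ x in K, (l^2*(u x)^2 - 2*(u x)*A + S))
        = (∫ x in K, (l^2*(u x)^2 - 2*(u x)*A)) + ∫ _ in K, S := integral_add (h1.sub h2) h3
    have c2 : (∫ x in K, (l^2*(u x)^2 - 2*(u x)*A))
        = (∫ x in K, l^2*(u x)^2) - ∫ x in K, 2*(u x)*A := integral_sub h1 h2
    have c3 : (∫ x in K, l^2*(u x)^2) = l^2*S := by rw [hS, integral_const_mul]
    have c4 : (∫ x in K, 2*(u x)*A) = 2*A*A := by
      rw [integral_mul_const, integral_const_mul, ← hA]
    have c5 : (∫ _ in K, S) = l^2*S := by rw [setIntegral_const, measureReal_def, hvol, smul_eq_mul]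
    rw [c1, c2, c3, c4, c5]; ring
  have rhs_eval : (∫ x in K, (2 * G₁ x.2 * (H₁ x.1 * l) + 2 * (D₂ * (2 * H₂ x.2)) / 2))
      = 2*l*((l^3/3) * D₁) + 2*(D₂ * (l * (l^3/3))) := by
    have i1 : IntegrableOn (fun x : ℝ × ℝ => 2 * G₁ x.2 * (H₁ x.1 * l)) K := by
      exact ((continuous_const.mul (hG₁c.comp continuous_snd)).mul
        ((hH₁c.comp continuous_fst).mul continuous_const)).continuousOn.integrableOn_compact hKc
    have i2 : IntegrableOn (fun x : ℝ × ℝ => 2 * (D₂ * (2 * H₂ x.2)) / 2) K := by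
      exact ((continuous_const.mul (continuous_const.mul (continuous_const.mul
        (hH₂c.comp continuous_snd)))).div_const 2).continuousOn.integrableOn_compact hKc
    rw [integral_add i1 i2]
    have e1 : (∫ x in K, 2 * G₁ x.2 * (H₁ x.1 * l)) = 2*l*((l^3/3) * D₁) := by
      have : (∫ x in K, 2 * G₁ x.2 * (H₁ x.1 * l))
          = (∫ s in I, H₁ s) * ∫ c in J, (2 * l) * G₁ c := by
        rw [hKdef, ← setProdMul H₁ (fun c => (2*l) * G₁ c) I J]
        congr 1; funext x; ring
      rw [this, integral_const_mul, avgI, fubD₁]; ring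
    have e2 : (∫ x in K, 2 * (D₂ * (2 * H₂ x.2)) / 2) = 2*(D₂ * (l * (l^3/3))) := by
      have : (∫ x in K, 2 * (D₂ * (2 * H₂ x.2)) / 2)
          = (∫ _ in I, (1:ℝ)) * ∫ s in J, (2 * D₂) * H₂ s := by
        rw [hKdef, ← setProdMul (fun _ => (1:ℝ)) (fun s => (2*D₂) * H₂ s) I J]
        congr 1; funext x; ring
      rw [this, integral_const_mul, hvolI, avgJ]; ring
    rw [e1, e2]
  -- Combine
  have outer : (∫ x in K, (∫ y in K, (u x - u y)^2) ) = 2*l^2*S - 2*A^2 := by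
    rw [setIntegral_congr_fun hKm (fun x _ => step1 x), lhs_eval]
  have key : 2*l^2*S - 2*A^2 ≤ 2*l*((l^3/3) * D₁) + 2*(D₂ * (l * (l^3/3))) := by
    calc 2*l^2*S - 2*A^2 = ∫ x in K, (l^2*(u x)^2 - 2*(u x)*A + S) := lhs_eval.symm
      _ ≤ _ := step3
      _ = _ := rhs_eval
  -- final algebra
  rw [hsum]
  have hl2 : (0:ℝ) < l^2 := by positivity
  have hrw : l^2 * ((1/l^2) * A)^2 = A^2 / l^2 := by field_simp
  rw [hrw]
  rw [div_add' _ _ _ (ne_of_gt hl2), le_div_iff₀ hl2]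
  nlinarith [key]
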